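/- Let g = sl_{2n+1}(ℂ) with the order-4 special automorphism σ = τ·(√-1)^{ad h}, where τ is the nontrivial diagram automorphism and α_i(h) = δ_{i,n} + δ_{i,n+1}. Then the fixed subalgebra g^σ is isomorphic to sp_{2n}(ℂ), and as g^σ-modules, both eigenspaces g_1 and g_3 (the i-eigenspace and (-i)-eigenspace of σ) are isomorphic to the standard 2n-dimensional representation of sp_{2n}. -/

import Mathlib

attribute [local instance 100] LieRing.ofAssociativeRing

namespace Stmt7Aux
open Matrix Complex

variable (n : ℕ)


noncomputable def dd (k : ℕ) : ℂ := if k < n then 1 else if k = n then Complex.I else -1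
noncomputable def ee (k : ℕ) : ℂ := if k < n then 1 else if k = n then -Complex.I else -1

lemma dd_mul_ee (k : ℕ) : dd n k * ee n k = 1 := by
  unfold dd ee; split_ifs <;> simp [Complex.I_mul_I]

lemma dd_rev_mul_ee (k : ℕ) (hk : k ≤ 2*n) : dd n (2*n - k) * ee n k = if k = n then 1 else -1 := by
  unfold dd ee
  split_ifs <;> first | omega | simp [Complex.I_mul_I] | norm_num

lemma dd_mul_ee_rev (k : ℕ) (hk : k ≤ 2*n) : dd n k * ee n (2*n - k) = if k = n then 1 else -1 := by
  unfold dd ee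
  split_ifs <;> first | omega | simp [Complex.I_mul_I] | norm_num

noncomputable def eps (p q : Fin (2*n+1)) : ℂ :=
  (-1)^(p.val + q.val + 1) * dd n (2*n - p.val) * ee n (2*n - q.val)

lemma rv (p : Fin (2*n+1)) : p.rev.val = 2*n - p.val := by
  rw [Fin.val_rev]; omega

lemma neg_one_pow_congr {a b : ℕ} (h : a % 2 = b % 2) : ((-1:ℂ))^a = (-1)^b := by
  rw [neg_one_pow_eq_pow_mod_two, h, ← neg_one_pow_eq_pow_mod_two]

lemma eps_diag (p : Fin (2*n+1)) : eps n p p = -1 := by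
  unfold eps
  rw [mul_assoc, dd_mul_ee n (2*n - p.val), neg_one_pow_congr (a := p.val + p.val + 1) (b := 1) (by omega)]
  ring

lemma eps_comp (p k q : Fin (2*n+1)) : eps n p k * eps n k q = - eps n p q := by
  unfold eps
  have h1 : ee n (2*n - k.val) * dd n (2*n - k.val) = 1 := by
    rw [mul_comm]; exact dd_mul_ee n _
  have h2 : ((-1:ℂ))^(p.val + k.val + 1) * (-1)^(k.val + q.val + 1)
      = -(-1)^(p.val + q.val + 1) := by
    rw [← pow_add, neg_one_pow_congr (b := p.val + q.val) (by omega)]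
    rw [pow_succ]; ring
  have expand : ((-1:ℂ))^(p.val + k.val + 1) * dd n (2*n - p.val) * ee n (2*n - k.val) *
        ((-1)^(k.val + q.val + 1) * dd n (2*n - k.val) * ee n (2*n - q.val))
      = (((-1:ℂ))^(p.val + k.val + 1) * (-1)^(k.val + q.val + 1)) *
        (ee n (2*n - k.val) * dd n (2*n - k.val)) *
        (dd n (2*n - p.val) * ee n (2*n - q.val)) := by ring
  rw [expand, h1, h2]; ring

lemma eps_pair (p q : Fin (2*n+1)) :
    eps n p q * eps n q.rev p.rev = if ((p.val = n) ↔ (q.val = n)) then 1 else -1 := by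
  unfold eps
  rw [rv, rv]
  have hp : 2*n - (2*n - p.val) = p.val := by omega
  have hq : 2*n - (2*n - q.val) = q.val := by omega
  rw [hp, hq]
  have h2 : ((-1:ℂ))^(p.val + q.val + 1) * (-1)^((2*n - q.val) + (2*n - p.val) + 1) = 1 := by
    rw [← pow_add, neg_one_pow_congr (b := 0) (by omega), pow_zero]
  have e1 := dd_rev_mul_ee n p.val (by omega)
  have e2 := dd_mul_ee_rev n q.val (by omega)
  have expand : ((-1:ℂ))^(p.val + q.val + 1) * dd n (2*n - p.val) * ee n (2*n - q.val) *
      ((-1)^((2*n - q.val) + (2*n - p.val) + 1) * dd n q.val * ee n p.val)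
      = (((-1:ℂ))^(p.val + q.val + 1) * (-1)^((2*n - q.val) + (2*n - p.val) + 1)) *
        ((dd n (2*n - p.val) * ee n p.val) * (dd n q.val * ee n (2*n - q.val))) := by ring
  rw [expand, h2, e1, e2, one_mul]
  by_cases h : p.val = n <;> by_cases h' : q.val = n <;> simp [h, h']




abbrev M (n : ℕ) := Matrix (Fin (2*n+1)) (Fin (2*n+1)) ℂ

noncomputable def TT : M n →ₗ[ℂ] M n where
  toFun X := Matrix.of fun p q => eps n p q * X q.rev p.rev
  map_add' X Y := by ext p q; simp [Matrix.add_apply, mul_add]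
  map_smul' c X := by ext p q; simp [Matrix.smul_apply]; ring

lemma TT_apply (X : M n) (p q : Fin (2*n+1)) : TT n X p q = eps n p q * X q.rev p.rev := rfl

lemma TT_bracket (X Y : M n) : TT n ⁅X, Y⁆ = ⁅TT n X, TT n Y⁆ := by
  have comp : ∀ p k q, eps n p k * eps n k q = - eps n p q := eps_comp n
  ext p q
  rw [TT_apply, Ring.lie_def, Ring.lie_def, Matrix.sub_apply, Matrix.sub_apply,
    Matrix.mul_apply, Matrix.mul_apply, Matrix.mul_apply, Matrix.mul_apply]
  have h1 : ∀ k : Fin (2*n+1), TT n X p k * TT n Y k q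
      = - eps n p q * (X k.rev p.rev * Y q.rev k.rev) := by
    intro k
    rw [TT_apply, TT_apply, show eps n p k * X k.rev p.rev * (eps n k q * Y q.rev k.rev)
      = (eps n p k * eps n k q) * (X k.rev p.rev * Y q.rev k.rev) from by ring, comp]
  have h2 : ∀ k : Fin (2*n+1), TT n Y p k * TT n X k q
      = - eps n p q * (Y k.rev p.rev * X q.rev k.rev) := by
    intro k
    rw [TT_apply, TT_apply, show eps n p k * Y k.rev p.rev * (eps n k q * X q.rev k.rev)
      = (eps n p k * eps n k q) * (Y k.rev p.rev * X q.rev k.rev) from by ring, comp]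
  rw [Finset.sum_congr rfl (fun k _ => h1 k), Finset.sum_congr rfl (fun k _ => h2 k),
    ← Finset.mul_sum, ← Finset.mul_sum]
  have r1 : ∑ k : Fin (2*n+1), X k.rev p.rev * Y q.rev k.rev
      = ∑ k : Fin (2*n+1), X k p.rev * Y q.rev k :=
    Fintype.sum_bijective Fin.rev Fin.rev_bijective _ _ (fun (k : Fin (2*n+1)) => rfl)
  have r2 : ∑ k : Fin (2*n+1), Y k.rev p.rev * X q.rev k.rev
      = ∑ k : Fin (2*n+1), Y k p.rev * X q.rev k :=
    Fintype.sum_bijective Fin.rev Fin.rev_bijective _ _ (fun (k : Fin (2*n+1)) => rfl)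
  rw [r1, r2]
  have r3 : ∑ k : Fin (2*n+1), X k p.rev * Y q.rev k
      = ∑ k : Fin (2*n+1), Y q.rev k * X k p.rev :=
    Finset.sum_congr rfl (fun k _ => mul_comm _ _)
  have r4 : ∑ k : Fin (2*n+1), Y k p.rev * X q.rev k
      = ∑ k : Fin (2*n+1), X q.rev k * Y k p.rev :=
    Finset.sum_congr rfl (fun k _ => mul_comm _ _)
  rw [r3, r4]; ring

lemma TT_std (a b : Fin (2*n+1)) :
    TT n (Matrix.single a b 1) = eps n b.rev a.rev • Matrix.single b.rev a.rev 1 := by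
  ext p q
  rw [TT_apply, Matrix.smul_apply]
  simp only [Matrix.single, Matrix.of_apply, smul_eq_mul]
  have hiff : (a = q.rev ∧ b = p.rev) ↔ (b.rev = p ∧ a.rev = q) := by
    constructor
    · rintro ⟨ha, hb⟩; exact ⟨by rw [hb, Fin.rev_rev], by rw [ha, Fin.rev_rev]⟩
    · rintro ⟨h1, h2⟩; exact ⟨by rw [← h2, Fin.rev_rev], by rw [← h1, Fin.rev_rev]⟩
  by_cases h : b.rev = p ∧ a.rev = q
  · rw [if_pos (hiff.mpr h), if_pos h, ← h.1, ← h.2]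
  · rw [if_neg (fun hc => h (hiff.mp hc)), if_neg h, mul_zero, mul_zero]



def nn : Fin (2*n+1) := ⟨n, by omega⟩

def iota : Fin n ⊕ Fin n → Fin (2*n+1) :=
  Sum.elim (fun i => ⟨i.val, by omega⟩) (fun i => ⟨2*n - i.val, by omega⟩)

noncomputable def gam : Fin n ⊕ Fin n → ℂ :=
  Sum.elim (fun _ => 1) (fun i => (-1)^(i.val+1))

def kap (hn : 0 < n) : Fin (2*n+1) → Fin n ⊕ Fin n := fun p =>
  if h : p.val < n then Sum.inl ⟨p.val, h⟩
  else if h' : n < p.val then Sum.inr ⟨2*n - p.val, by omega⟩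
  else Sum.inl ⟨0, hn⟩

lemma iota_ne_nn (I : Fin n ⊕ Fin n) : iota n I ≠ nn n := by
  rcases I with i | i <;> simp only [iota, Sum.elim_inl, Sum.elim_inr, nn, ne_eq, Fin.mk.injEq]
  · omega
  · have := i.isLt; omega

lemma rev_iota (I : Fin n ⊕ Fin n) : (iota n I).rev = iota n I.swap := by
  rcases I with i | i <;>
    · apply Fin.ext
      rw [Fin.val_rev]
      simp only [iota, Sum.elim_inl, Sum.elim_inr, Sum.swap_inl, Sum.swap_inr]
      have := i.isLt; omega

lemma rev_nn : (nn n).rev = nn n := by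
  apply Fin.ext; rw [Fin.val_rev]; simp only [nn]; omega

lemma rev_ne_nn {p : Fin (2*n+1)} (h : p ≠ nn n) : p.rev ≠ nn n := by
  intro hc
  exact h (by rw [← Fin.rev_rev p, hc, rev_nn])

lemma kap_iota (hn : 0 < n) (I : Fin n ⊕ Fin n) : kap n hn (iota n I) = I := by
  rcases I with i | i <;> simp only [kap, iota, Sum.elim_inl, Sum.elim_inr]
  · simp [i.isLt]
  · have hi := i.isLt
    show kap n hn (iota n (Sum.inr i)) = Sum.inr i
    unfold kap
    rw [dif_neg (by simp only [iota, Sum.elim_inr, Fin.val_mk]; omega),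
      dif_pos (by simp only [iota, Sum.elim_inr, Fin.val_mk]; omega)]
    congr 1
    apply Fin.ext
    simp only [iota, Sum.elim_inr, Fin.val_mk]
    omega

lemma iota_kap (hn : 0 < n) {p : Fin (2*n+1)} (h : p ≠ nn n) : iota n (kap n hn p) = p := by
  have hv : p.val ≠ n := fun hc => h (Fin.ext hc)
  have := p.isLt
  unfold kap
  by_cases h1 : p.val < n
  · rw [dif_pos h1]; rfl
  · rw [dif_neg h1, dif_pos (by omega)]
    apply Fin.ext
    simp only [iota, Sum.elim_inr]
    omega

lemma kap_rev (hn : 0 < n) {p : Fin (2*n+1)} (h : p ≠ nn n) :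
    kap n hn p.rev = (kap n hn p).swap := by
  have : iota n (kap n hn p.rev) = iota n ((kap n hn p).swap) := by
    rw [iota_kap n hn (rev_ne_nn n h), ← rev_iota, iota_kap n hn h]
  have hinj : Function.Injective (iota n) := by
    intro I J hIJ
    rw [← kap_iota n hn I, ← kap_iota n hn J, hIJ]
  exact hinj this

lemma gam_sq (I : Fin n ⊕ Fin n) : gam n I * gam n I = 1 := by
  rcases I with i | i <;> simp only [gam, Sum.elim_inl, Sum.elim_inr]
  · ring
  · rw [← pow_add]
    rw [show ((-1:ℂ))^(i.val+1+(i.val+1)) = ((-1:ℂ)^2)^(i.val+1) from by rw [← pow_mul]; ring_nf]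
    norm_num

noncomputable def splitEquiv (hn : 0 < n) : Unit ⊕ (Fin n ⊕ Fin n) ≃ Fin (2*n+1) where
  toFun := Sum.elim (fun _ => nn n) (iota n)
  invFun p := if p = nn n then Sum.inl () else Sum.inr (kap n hn p)
  left_inv x := by
    rcases x with _ | I
    · simp
    · simp only [Sum.elim_inr]
      simp [iota_ne_nn n I, kap_iota n hn I]
  right_inv p := by
    by_cases h : p = nn n
    · simp only []
      rw [if_pos h]
      simp [h]
    · simp only []
      rw [if_neg h]
      simp [iota_kap n hn h]

lemma sum_split (hn : 0 < n) (f : Fin (2*n+1) → ℂ) :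
    ∑ p, f p = f (nn n) + ∑ I : Fin n ⊕ Fin n, f (iota n I) := by
  rw [← Equiv.sum_comp (splitEquiv n hn) f, Fintype.sum_sum_type]
  simp [splitEquiv]


lemma dd_big {k : ℕ} (h : n < k) : dd n k = -1 := by
  unfold dd; split_ifs <;> first | omega | rfl
lemma dd_small {k : ℕ} (h : k < n) : dd n k = 1 := by
  unfold dd; split_ifs <;> first | omega | rfl
lemma dd_n : dd n n = Complex.I := by
  unfold dd; split_ifs <;> first | omega | rfl
lemma ee_big {k : ℕ} (h : n < k) : ee n k = -1 := by
  unfold ee; split_ifs <;> first | omega | rfl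
lemma ee_small {k : ℕ} (h : k < n) : ee n k = 1 := by
  unfold ee; split_ifs <;> first | omega | rfl
lemma ee_n : ee n n = -Complex.I := by
  unfold ee; split_ifs <;> first | omega | rfl

lemma two_x_zero {x : ℂ} (h : x = -1 * x) : x = 0 := by
  have h2 : (2:ℂ) * x = 0 := by linear_combination h
  exact (mul_eq_zero.mp h2).resolve_left two_ne_zero

lemma fix_entry {X : M n} (h : TT n X = X) (p q : Fin (2*n+1)) :
    X p q = eps n p q * X q.rev p.rev := by
  conv_lhs => rw [← h]
  rfl

lemma nn_val : (nn n).val = n := rfl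

lemma fix_mid {X : M n} (h : TT n X = X) (p : Fin (2*n+1)) :
    X (nn n) p = 0 ∧ X p (nn n) = 0 := by
  have hdiag : X (nn n) (nn n) = 0 := by
    apply two_x_zero
    have h1 := fix_entry n h (nn n) (nn n)
    rw [eps_diag, rev_nn] at h1
    exact h1
  constructor
  · by_cases hp : p = nn n
    · rw [hp]; exact hdiag
    · apply two_x_zero
      have h1 := fix_entry n h (nn n) p
      have h2 := fix_entry n h p.rev (nn n)
      rw [rev_nn] at h1
      rw [rev_nn, Fin.rev_rev] at h2
      have hpair := eps_pair n (nn n) p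
      rw [rev_nn] at hpair
      have hv : p.val ≠ n := fun hc => hp (Fin.ext hc)
      rw [if_neg (by simp [nn_val, hv])] at hpair
      calc X (nn n) p = eps n (nn n) p * (eps n p.rev (nn n) * X (nn n) p) := by
            rw [← h2, ← h1]
        _ = (eps n (nn n) p * eps n p.rev (nn n)) * X (nn n) p := by ring
        _ = -1 * X (nn n) p := by rw [hpair]
  · by_cases hp : p = nn n
    · rw [hp]; exact hdiag
    · apply two_x_zero
      have h1 := fix_entry n h p (nn n)
      have h2 := fix_entry n h (nn n) p.rev
      rw [rev_nn] at h1
      rw [rev_nn, Fin.rev_rev] at h2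
      have hpair := eps_pair n p (nn n)
      rw [rev_nn] at hpair
      have hv : p.val ≠ n := fun hc => hp (Fin.ext hc)
      rw [if_neg (by simp [nn_val, hv])] at hpair
      calc X p (nn n) = eps n p (nn n) * (eps n (nn n) p.rev * X p (nn n)) := by
            rw [← h2, ← h1]
        _ = (eps n p (nn n) * eps n (nn n) p.rev) * X p (nn n) := by ring
        _ = -1 * X p (nn n) := by rw [hpair]

lemma fix_trace {X : M n} (h : TT n X = X) : X.trace = 0 := by
  apply two_x_zero
  have hdiag : ∀ p : Fin (2*n+1), X p p = -1 * X p.rev p.rev := by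
    intro p
    have h1 := fix_entry n h p p
    rw [eps_diag] at h1
    linear_combination h1
  calc X.trace = ∑ p, X p p := rfl
    _ = ∑ p, -1 * X p.rev p.rev := Finset.sum_congr rfl fun p _ => hdiag p
    _ = -1 * ∑ p : Fin (2*n+1), X p.rev p.rev := by rw [Finset.mul_sum]
    _ = -1 * ∑ p, X p p := by
        congr 1
        exact Fintype.sum_bijective Fin.rev Fin.rev_bijective _ _ (fun (p : Fin (2*n+1)) => rfl)
    _ = -1 * X.trace := rfl

lemma eig_entry {X : M n} {c : ℂ} (h : TT n X = c • X) (p q : Fin (2*n+1)) :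
    c * X p q = eps n p q * X q.rev p.rev := by
  have h1 := congrFun (congrFun h p) q
  rw [TT_apply] at h1
  rw [Matrix.smul_apply, smul_eq_mul] at h1
  exact h1.symm

lemma eig_offmid {X : M n} {c : ℂ} (hc : c * c = -1) (h : TT n X = c • X)
    (p q : Fin (2*n+1)) (hpq : (p.val = n) ↔ (q.val = n)) : X p q = 0 := by
  apply two_x_zero
  have h1 := eig_entry n h p q
  have h2 := eig_entry n h q.rev p.rev
  rw [Fin.rev_rev, Fin.rev_rev] at h2
  have hpair := eps_pair n p q
  rw [if_pos hpq] at hpair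
  calc X p q = -(c*c) * X p q := by rw [hc]; ring
    _ = -(c * (c * X p q)) := by ring
    _ = -(c * (eps n p q * X q.rev p.rev)) := by rw [h1]
    _ = -(eps n p q * (c * X q.rev p.rev)) := by ring
    _ = -(eps n p q * (eps n q.rev p.rev * X p q)) := by rw [h2]
    _ = -((eps n p q * eps n q.rev p.rev) * X p q) := by ring
    _ = -1 * X p q := by rw [hpair]; ring

noncomputable def phi : M n →ₗ[ℂ] Matrix (Fin n ⊕ Fin n) (Fin n ⊕ Fin n) ℂ where
  toFun X := Matrix.of fun I J => gam n I * gam n J * X (iota n I) (iota n J)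
  map_add' X Y := by ext I J; simp [Matrix.add_apply]; ring
  map_smul' c X := by ext I J; simp [Matrix.smul_apply]; ring

lemma phi_apply (X : M n) (I J : Fin n ⊕ Fin n) :
    phi n X I J = gam n I * gam n J * X (iota n I) (iota n J) := rfl

noncomputable def psi : M n →ₗ[ℂ] (Fin n ⊕ Fin n → ℂ) where
  toFun X := fun I => gam n I * X (iota n I) (nn n)
  map_add' X Y := by funext I; simp [Matrix.add_apply]; ring
  map_smul' c X := by funext I; simp [Matrix.smul_apply]; ring

lemma psi_apply (X : M n) (I : Fin n ⊕ Fin n) :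
    psi n X I = gam n I * X (iota n I) (nn n) := rfl

lemma swap_scalar (I J : Fin n ⊕ Fin n) :
    gam n I * gam n J * gam n I.swap * gam n J.swap * eps n (iota n I) (iota n J)
    = if (I.isLeft = J.isLeft) then -1 else 1 := by
  rcases I with i | i <;> rcases J with j | j <;>
    have hi := i.isLt <;> have hj := j.isLt <;>
    simp only [gam, iota, Sum.elim_inl, Sum.elim_inr, Sum.swap_inl, Sum.swap_inr,
      Sum.isLeft_inl, Sum.isLeft_inr, Bool.true_eq_false, Bool.false_eq_true, if_true, if_false, reduceIte]
  all_goals unfold eps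
  all_goals simp only [Fin.val_mk]
  case inl.inl =>
    rw [dd_big n (show n < 2*n - i.val by omega), ee_big n (show n < 2*n - j.val by omega)]
    have hp : ((-1:ℂ))^(i.val+1) * (-1)^(j.val+1) * (-1)^(i.val + j.val + 1) = -1 := by
      rw [← pow_add, ← pow_add, neg_one_pow_congr (b := 1) (by omega), pow_one]
    linear_combination hp
  case inl.inr =>
    rw [dd_big n (show n < 2*n - i.val by omega),
      show 2*n - (2*n - j.val) = j.val by omega, ee_small n hj]
    have hp : ((-1:ℂ))^(j.val+1) * (-1)^(i.val+1) * (-1)^(i.val + (2*n - j.val) + 1) = -1 := by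
      rw [← pow_add, ← pow_add, neg_one_pow_congr (b := 1) (by omega), pow_one]
    linear_combination (-1 : ℂ) * hp
  case inr.inl =>
    rw [show 2*n - (2*n - i.val) = i.val by omega, dd_small n hi,
      ee_big n (show n < 2*n - j.val by omega)]
    have hp : ((-1:ℂ))^(i.val+1) * (-1)^(j.val+1) * (-1)^((2*n - i.val) + j.val + 1) = -1 := by
      rw [← pow_add, ← pow_add, neg_one_pow_congr (b := 1) (by omega), pow_one]
    linear_combination (-1 : ℂ) * hp
  case inr.inr =>
    rw [show 2*n - (2*n - i.val) = i.val by omega, dd_small n hi,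
      show 2*n - (2*n - j.val) = j.val by omega, ee_small n hj]
    have hp : ((-1:ℂ))^(i.val+1) * (-1)^(j.val+1) * (-1)^((2*n - i.val) + (2*n - j.val) + 1) = -1 := by
      rw [← pow_add, ← pow_add, neg_one_pow_congr (b := 1) (by omega), pow_one]
    linear_combination hp


lemma mem_sp_iff (Y : Matrix (Fin n ⊕ Fin n) (Fin n ⊕ Fin n) ℂ) :
    Y ∈ LieAlgebra.Symplectic.sp (Fin n) ℂ ↔
      Yᵀ * Matrix.J (Fin n) ℂ = Matrix.J (Fin n) ℂ * (-Y) := by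
  rw [LieAlgebra.Symplectic.sp, mem_skewAdjointMatricesLieSubalgebra,
    mem_skewAdjointMatricesSubmodule]
  rfl

lemma tmulJ (Y : Matrix (Fin n ⊕ Fin n) (Fin n ⊕ Fin n) ℂ) (I : Fin n ⊕ Fin n) (j : Fin n) :
    (Yᵀ * Matrix.J (Fin n) ℂ) I (Sum.inl j) = Y (Sum.inr j) I
    ∧ (Yᵀ * Matrix.J (Fin n) ℂ) I (Sum.inr j) = - Y (Sum.inl j) I := by
  constructor <;>
    simp [Matrix.mul_apply, Fintype.sum_sum_type, Matrix.J, Matrix.one_apply,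
      Matrix.transpose_apply, Finset.sum_ite_eq', Finset.sum_ite_eq]

lemma Jmul (Y : Matrix (Fin n ⊕ Fin n) (Fin n ⊕ Fin n) ℂ) (i : Fin n) (K : Fin n ⊕ Fin n) :
    (Matrix.J (Fin n) ℂ * Y) (Sum.inl i) K = - Y (Sum.inr i) K
    ∧ (Matrix.J (Fin n) ℂ * Y) (Sum.inr i) K = Y (Sum.inl i) K := by
  constructor <;>
    simp [Matrix.mul_apply, Fintype.sum_sum_type, Matrix.J, Matrix.one_apply,
      Finset.sum_ite_eq', Finset.sum_ite_eq]

lemma mem_sp_iff' (Y : Matrix (Fin n ⊕ Fin n) (Fin n ⊕ Fin n) ℂ) :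
    Y ∈ LieAlgebra.Symplectic.sp (Fin n) ℂ ↔
      ∀ I J, Y I J = (if I.isLeft = J.isLeft then (-1:ℂ) else 1) * Y J.swap I.swap := by
  rw [mem_sp_iff]
  constructor
  · intro h I J
    rcases I with i | i <;> rcases J with j | j <;>
      simp only [Sum.isLeft_inl, Sum.isLeft_inr, Sum.swap_inl, Sum.swap_inr,
        Bool.true_eq_false, Bool.false_eq_true, if_true, if_false, reduceIte]
    · have h1 := congrFun (congrFun h (Sum.inr i)) (Sum.inl j)
      rw [(tmulJ n Y _ j).1, (Jmul n (-Y) i _).2] at h1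
      simp only [Matrix.neg_apply] at h1
      linear_combination h1
    · have h1 := congrFun (congrFun h (Sum.inr j)) (Sum.inr i)
      rw [(tmulJ n Y _ i).2, (Jmul n (-Y) j _).2] at h1
      simp only [Matrix.neg_apply] at h1
      linear_combination - h1
    · have h1 := congrFun (congrFun h (Sum.inl i)) (Sum.inl j)
      rw [(tmulJ n Y _ j).1, (Jmul n (-Y) i _).1] at h1
      simp only [Matrix.neg_apply, neg_neg] at h1
      linear_combination - h1
    · have h1 := congrFun (congrFun h (Sum.inl i)) (Sum.inr j)
      rw [(tmulJ n Y _ j).2, (Jmul n (-Y) i _).1] at h1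
      simp only [Matrix.neg_apply, neg_neg] at h1
      linear_combination - h1
  · intro h
    ext I K
    rcases I with i | i <;> rcases K with j | j
    · rw [(tmulJ n Y _ j).1, (Jmul n (-Y) i _).1]
      have h1 := h (Sum.inr j) (Sum.inl i)
      simp only [Sum.isLeft_inr, Sum.isLeft_inl, Sum.swap_inl, Sum.swap_inr,
        Bool.false_eq_true, if_false, one_mul] at h1
      simp only [Matrix.neg_apply, neg_neg]
      linear_combination h1
    · rw [(tmulJ n Y _ j).2, (Jmul n (-Y) i _).1]
      have h1 := h (Sum.inl j) (Sum.inl i)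
      simp only [Sum.isLeft_inl, Sum.swap_inl, reduceIte] at h1
      simp only [Matrix.neg_apply, neg_neg]
      linear_combination - h1
    · rw [(tmulJ n Y _ j).1, (Jmul n (-Y) i _).2]
      have h1 := h (Sum.inr j) (Sum.inr i)
      simp only [Sum.isLeft_inr, Sum.swap_inr, reduceIte] at h1
      simp only [Matrix.neg_apply]
      linear_combination h1
    · rw [(tmulJ n Y _ j).2, (Jmul n (-Y) i _).2]
      have h1 := h (Sum.inl j) (Sum.inr i)
      simp only [Sum.isLeft_inl, Sum.isLeft_inr, Sum.swap_inr, Sum.swap_inl,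
        Bool.true_eq_false, if_false, one_mul] at h1
      simp only [Matrix.neg_apply]
      linear_combination - h1

lemma phi_bracket (hn : 0 < n) {X Y : M n} (hX : TT n X = X) (hY : TT n Y = Y) :
    phi n ⁅X, Y⁆ = ⁅phi n X, phi n Y⁆ := by
  ext I J
  rw [phi_apply, Ring.lie_def, Ring.lie_def, Matrix.sub_apply, Matrix.sub_apply,
    Matrix.mul_apply, Matrix.mul_apply]
  have hXY : ∑ j : Fin (2*n+1), X (iota n I) j * Y j (iota n J)
      = ∑ K : Fin n ⊕ Fin n, X (iota n I) (iota n K) * Y (iota n K) (iota n J) := by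
    rw [sum_split n hn, (fix_mid n hX (iota n I)).2, zero_mul, zero_add]
  have hYX : ∑ j : Fin (2*n+1), Y (iota n I) j * X j (iota n J)
      = ∑ K : Fin n ⊕ Fin n, Y (iota n I) (iota n K) * X (iota n K) (iota n J) := by
    rw [sum_split n hn, (fix_mid n hY (iota n I)).2, zero_mul, zero_add]
  rw [hXY, hYX, Matrix.mul_apply, Matrix.mul_apply]
  have e1 : ∀ K : Fin n ⊕ Fin n, phi n X I K * phi n Y K J
      = gam n I * gam n J * (X (iota n I) (iota n K) * Y (iota n K) (iota n J)) := by
    intro K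
    rw [phi_apply, phi_apply]
    have hK := gam_sq n K
    calc gam n I * gam n K * X (iota n I) (iota n K) * (gam n K * gam n J * Y (iota n K) (iota n J))
        = (gam n K * gam n K) * (gam n I * gam n J * (X (iota n I) (iota n K) * Y (iota n K) (iota n J))) := by ring
      _ = _ := by rw [hK, one_mul]
  have e2 : ∀ K : Fin n ⊕ Fin n, phi n Y I K * phi n X K J
      = gam n I * gam n J * (Y (iota n I) (iota n K) * X (iota n K) (iota n J)) := by
    intro K
    rw [phi_apply, phi_apply]
    have hK := gam_sq n K
    calc gam n I * gam n K * Y (iota n I) (iota n K) * (gam n K * gam n J * X (iota n K) (iota n J))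
        = (gam n K * gam n K) * (gam n I * gam n J * (Y (iota n I) (iota n K) * X (iota n K) (iota n J))) := by ring
      _ = _ := by rw [hK, one_mul]
  rw [Finset.sum_congr rfl (fun K _ => e1 K), Finset.sum_congr rfl (fun K _ => e2 K),
    ← Finset.mul_sum, ← Finset.mul_sum]
  ring

lemma phi_inj (hn : 0 < n) {X Y : M n} (hX : TT n X = X) (hY : TT n Y = Y)
    (h : phi n X = phi n Y) : X = Y := by
  ext p q
  by_cases hp : p = nn n
  · rw [hp, (fix_mid n hX q).1, (fix_mid n hY q).1]
  · by_cases hq : q = nn n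
    · rw [hq, (fix_mid n hX p).2, (fix_mid n hY p).2]
    · have h1 := congrFun (congrFun h (kap n hn p)) (kap n hn q)
      rw [phi_apply, phi_apply, iota_kap n hn hp, iota_kap n hn hq] at h1
      have ha := gam_sq n (kap n hn p)
      have hb := gam_sq n (kap n hn q)
      calc X p q = (gam n (kap n hn p) * gam n (kap n hn p))
            * ((gam n (kap n hn q) * gam n (kap n hn q)) * X p q) := by rw [ha, hb]; ring
        _ = gam n (kap n hn p) * gam n (kap n hn q)
            * (gam n (kap n hn p) * gam n (kap n hn q) * X p q) := by ring
        _ = gam n (kap n hn p) * gam n (kap n hn q)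
            * (gam n (kap n hn p) * gam n (kap n hn q) * Y p q) := by rw [h1]
        _ = (gam n (kap n hn p) * gam n (kap n hn p))
            * ((gam n (kap n hn q) * gam n (kap n hn q)) * Y p q) := by ring
        _ = Y p q := by rw [ha, hb]; ring

lemma phi_mem_sp (hn : 0 < n) {X : M n} (hX : TT n X = X) :
    phi n X ∈ LieAlgebra.Symplectic.sp (Fin n) ℂ := by
  rw [mem_sp_iff']
  intro I J
  have hrel := fix_entry n hX (iota n I) (iota n J)
  rw [rev_iota, rev_iota] at hrel
  rw [phi_apply, phi_apply, hrel]
  have hs := swap_scalar n I J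
  have h3 := gam_sq n I.swap
  have h4 := gam_sq n J.swap
  have key : gam n I * gam n J * eps n (iota n I) (iota n J)
      = (if I.isLeft = J.isLeft then (-1:ℂ) else 1) * (gam n I.swap * gam n J.swap) := by
    calc gam n I * gam n J * eps n (iota n I) (iota n J)
        = (gam n I.swap * gam n I.swap) * ((gam n J.swap * gam n J.swap)
          * (gam n I * gam n J * eps n (iota n I) (iota n J))) := by rw [h3, h4]; ring
      _ = (gam n I * gam n J * gam n I.swap * gam n J.swap * eps n (iota n I) (iota n J))
          * (gam n I.swap * gam n J.swap) := by ring
      _ = _ := by rw [hs]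
  linear_combination X (iota n J.swap) (iota n I.swap) * key

lemma module_prop (hn : 0 < n) {X : M n} (hX : TT n X = X) (Y : M n) :
    psi n ⁅X, Y⁆ = (phi n X).mulVec (psi n Y) := by
  funext I
  rw [psi_apply, Matrix.mulVec, Ring.lie_def, Matrix.sub_apply, dotProduct]
  have hYX : (Y * X) (iota n I) (nn n) = 0 := by
    rw [Matrix.mul_apply]
    exact Finset.sum_eq_zero fun k _ => by rw [(fix_mid n hX k).2, mul_zero]
  have hXY : (X * Y) (iota n I) (nn n)
      = ∑ K : Fin n ⊕ Fin n, X (iota n I) (iota n K) * Y (iota n K) (nn n) := by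
    rw [Matrix.mul_apply, sum_split n hn, (fix_mid n hX (iota n I)).2, zero_mul, zero_add]
  rw [hYX, hXY, sub_zero, Finset.mul_sum]
  apply Finset.sum_congr rfl
  intro K _
  rw [phi_apply, psi_apply]
  have hK := gam_sq n K
  calc gam n I * (X (iota n I) (iota n K) * Y (iota n K) (nn n))
      = (gam n K * gam n K) * (gam n I * (X (iota n I) (iota n K) * Y (iota n K) (nn n))) := by
        rw [hK]; ring
    _ = gam n I * gam n K * X (iota n I) (iota n K) * (gam n K * Y (iota n K) (nn n)) := by ring

lemma swap_if (I J : Fin n ⊕ Fin n) :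
    (if J.swap.isLeft = I.swap.isLeft then (-1:ℂ) else 1)
      = if I.isLeft = J.isLeft then (-1:ℂ) else 1 := by
  rcases I with i | i <;> rcases J with j | j <;> simp

lemma sp_surj (hn : 0 < n) {Y : Matrix (Fin n ⊕ Fin n) (Fin n ⊕ Fin n) ℂ}
    (hY : Y ∈ LieAlgebra.Symplectic.sp (Fin n) ℂ) :
    ∃ X : M n, TT n X = X ∧ X.trace = 0 ∧ phi n X = Y := by
  have hYr := (mem_sp_iff' n Y).mp hY
  set X : M n := Matrix.of (fun p q => if p = nn n ∨ q = nn n then 0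
      else gam n (kap n hn p) * gam n (kap n hn q) * Y (kap n hn p) (kap n hn q)) with hXdef
  have hXa : ∀ p q, X p q = if p = nn n ∨ q = nn n then 0
      else gam n (kap n hn p) * gam n (kap n hn q) * Y (kap n hn p) (kap n hn q) :=
    fun p q => rfl
  have hfix : TT n X = X := by
    ext p q
    rw [TT_apply, hXa, hXa]
    by_cases hpq : p = nn n ∨ q = nn n
    · rw [if_pos hpq, if_pos, mul_zero]
      rcases hpq with hp | hq
      · right; rw [hp, rev_nn]
      · left; rw [hq, rev_nn]
    · push_neg at hpq
      obtain ⟨hp, hq⟩ := hpq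
      rw [if_neg (by push_neg; exact ⟨rev_ne_nn n hq, rev_ne_nn n hp⟩),
        if_neg (by push_neg; exact ⟨hp, hq⟩)]
      rw [kap_rev n hn hq, kap_rev n hn hp]
      set I := kap n hn p with hI
      set J := kap n hn q with hJ
      have hYs := hYr J.swap I.swap
      rw [Sum.swap_swap, Sum.swap_swap, swap_if] at hYs
      rw [hYs]
      have hIp : iota n I = p := iota_kap n hn hp
      have hJq : iota n J = q := iota_kap n hn hq
      have hs := swap_scalar n I J
      rw [hIp, hJq] at hs
      have h1 := gam_sq n I
      have h2 := gam_sq n J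
      set ss : ℂ := if I.isLeft = J.isLeft then (-1:ℂ) else 1 with hssdef
      have hss : ss * ss = 1 := by rw [hssdef]; split_ifs <;> norm_num
      have e1 : eps n p q * (gam n I.swap * gam n J.swap) = ss * (gam n I * gam n J) := by
        calc eps n p q * (gam n I.swap * gam n J.swap)
            = (gam n I * gam n I) * ((gam n J * gam n J)
              * (eps n p q * (gam n I.swap * gam n J.swap))) := by rw [h1, h2]; ring
          _ = (gam n I * gam n J * gam n I.swap * gam n J.swap * eps n p q)
              * (gam n I * gam n J) := by ring
          _ = ss * (gam n I * gam n J) := by rw [hs]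
      calc eps n p q * (gam n J.swap * gam n I.swap * (ss * Y I J))
          = (eps n p q * (gam n I.swap * gam n J.swap)) * (ss * Y I J) := by ring
        _ = (ss * (gam n I * gam n J)) * (ss * Y I J) := by rw [e1]
        _ = (ss * ss) * (gam n I * gam n J * Y I J) := by ring
        _ = gam n I * gam n J * Y I J := by rw [hss, one_mul]
  refine ⟨X, hfix, fix_trace n hfix, ?_⟩
  ext I J
  rw [phi_apply, hXa, if_neg (by push_neg; exact ⟨iota_ne_nn n I, iota_ne_nn n J⟩),
    kap_iota n hn I, kap_iota n hn J]
  have h1 := gam_sq n I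
  have h2 := gam_sq n J
  calc gam n I * gam n J * (gam n I * gam n J * Y I J)
      = (gam n I * gam n I) * ((gam n J * gam n J) * Y I J) := by ring
    _ = Y I J := by rw [h1, h2]; ring

lemma psi_inj (hn : 0 < n) {c : ℂ} (hc : c * c = -1) {X Y : M n}
    (hX : TT n X = c • X) (hY : TT n Y = c • Y) (h : psi n X = psi n Y) : X = Y := by
  have hc0 : c ≠ 0 := by
    intro h0
    rw [h0, mul_zero] at hc
    exact (by norm_num : (0:ℂ) ≠ -1) hc
  have hcol : ∀ p : Fin (2*n+1), X p (nn n) = Y p (nn n) := by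
    intro p
    by_cases hp : p = nn n
    · rw [hp, eig_offmid n hc hX _ _ Iff.rfl, eig_offmid n hc hY _ _ Iff.rfl]
    · have h1 := congrFun h (kap n hn p)
      rw [psi_apply, psi_apply, iota_kap n hn hp] at h1
      have hg := gam_sq n (kap n hn p)
      calc X p (nn n) = (gam n (kap n hn p) * gam n (kap n hn p)) * X p (nn n) := by
            rw [hg, one_mul]
        _ = gam n (kap n hn p) * (gam n (kap n hn p) * X p (nn n)) := by ring
        _ = gam n (kap n hn p) * (gam n (kap n hn p) * Y p (nn n)) := by rw [h1]
        _ = (gam n (kap n hn p) * gam n (kap n hn p)) * Y p (nn n) := by ring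
        _ = Y p (nn n) := by rw [hg, one_mul]
  ext p q
  by_cases hq : q = nn n
  · rw [hq]; exact hcol p
  · have hqv : q.val ≠ n := fun hcc => hq (Fin.ext hcc)
    by_cases hp : p = nn n
    · subst hp
      have e1 := eig_entry n hX (nn n) q
      have e2 := eig_entry n hY (nn n) q
      rw [rev_nn] at e1 e2
      apply mul_left_cancel₀ hc0
      rw [e1, e2, hcol q.rev]
    · have hpv : p.val ≠ n := fun hcc => hp (Fin.ext hcc)
      rw [eig_offmid n hc hX p q (iff_of_false hpv hqv),
        eig_offmid n hc hY p q (iff_of_false hpv hqv)]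

lemma psi_surj (hn : 0 < n) {c : ℂ} (hc : c * c = -1) (v : Fin n ⊕ Fin n → ℂ) :
    ∃ Y : M n, TT n Y = c • Y ∧ Y.trace = 0 ∧ psi n Y = v := by
  set Y : M n := Matrix.of (fun p q =>
    if q = nn n then (if p = nn n then 0 else gam n (kap n hn p) * v (kap n hn p))
    else if p = nn n then
      (-c) * eps n (nn n) q * (gam n (kap n hn q.rev) * v (kap n hn q.rev))
    else 0) with hYdef
  have hYa : ∀ p q, Y p q =
      if q = nn n then (if p = nn n then 0 else gam n (kap n hn p) * v (kap n hn p))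
      else if p = nn n then
        (-c) * eps n (nn n) q * (gam n (kap n hn q.rev) * v (kap n hn q.rev))
      else 0 := fun p q => rfl
  have heig : TT n Y = c • Y := by
    ext p q
    rw [TT_apply, Matrix.smul_apply, smul_eq_mul, hYa, hYa]
    by_cases hq : q = nn n <;> by_cases hp : p = nn n
    · subst hp; subst hq
      rw [rev_nn]
      simp
    · -- q = nn, p ≠ nn : column condition
      subst hq
      rw [rev_nn, if_neg (rev_ne_nn n hp), if_pos (rfl : nn n = nn n),
        if_pos (rfl : nn n = nn n), if_neg hp, Fin.rev_rev]
      have hpair := eps_pair n p (nn n)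
      rw [rev_nn, if_neg (fun hcc => hp (Fin.ext (hcc.mpr rfl)))] at hpair
      calc eps n p (nn n) * (-c * eps n (nn n) p.rev * (gam n (kap n hn p) * v (kap n hn p)))
          = (eps n p (nn n) * eps n (nn n) p.rev) * (-c) * (gam n (kap n hn p) * v (kap n hn p)) := by
            ring
        _ = (-1) * (-c) * (gam n (kap n hn p) * v (kap n hn p)) := by rw [hpair]
        _ = c * (gam n (kap n hn p) * v (kap n hn p)) := by ring
    · -- q ≠ nn, p = nn : row
      subst hp
      rw [rev_nn, if_neg hq, if_pos (rfl : nn n = nn n), if_pos (rfl : nn n = nn n),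
        if_neg (rev_ne_nn n hq)]
      calc eps n (nn n) q * (gam n (kap n hn q.rev) * v (kap n hn q.rev))
          = (c * (-c)) * (eps n (nn n) q * (gam n (kap n hn q.rev) * v (kap n hn q.rev))) := by
            have : c * (-c) = 1 := by linear_combination - hc
            rw [this, one_mul]
        _ = c * (-c * eps n (nn n) q * (gam n (kap n hn q.rev) * v (kap n hn q.rev))) := by ring
    · rw [if_neg hq, if_neg hp, if_neg (rev_ne_nn n hp), if_neg (rev_ne_nn n hq),
        mul_zero, mul_zero]
  refine ⟨Y, heig, ?_, ?_⟩
  · show ∑ p, Y p p = 0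
    apply Finset.sum_eq_zero
    intro p _
    rw [hYa]
    by_cases hp : p = nn n
    · rw [if_pos hp, if_pos hp]
    · rw [if_neg hp, if_neg hp]
  · funext I
    rw [psi_apply, hYa, if_pos rfl, if_neg (iota_ne_nn n I), kap_iota n hn I]
    have hg := gam_sq n I
    calc gam n I * (gam n I * v I) = (gam n I * gam n I) * v I := by ring
      _ = v I := by rw [hg, one_mul]

lemma eps_step (i : Fin (2*n)) :
    eps n (i.rev.castSucc) (i.rev.succ)
      = if (i:ℕ) = n - 1 ∨ (i:ℕ) = n then Complex.I else 1 := by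
  have hi := i.isLt
  unfold eps
  rw [Fin.coe_castSucc, Fin.val_succ, Fin.val_rev]
  have h1 : 2*n - (2*n - (i.val+1)) = i.val + 1 := by omega
  have h2 : 2*n - (2*n - (i.val + 1) + 1) = i.val := by omega
  rw [h1, h2, neg_one_pow_congr (b := 0) (by omega), pow_zero, one_mul]
  by_cases hA : i.val = n - 1
  · rw [if_pos (Or.inl hA)]
    have hA' : i.val + 1 = n := by omega
    rw [hA', dd_n, ee_small n (by omega)]
    ring
  · by_cases hB : i.val = n
    · rw [if_pos (Or.inr hB), hB, dd_big n (by omega), ee_n]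
      ring
    · rw [if_neg (by tauto)]
      by_cases hC : i.val < n
      · rw [dd_small n (by omega), ee_small n hC]; ring
      · rw [dd_big n (by omega), ee_big n (by omega)]; ring

lemma rev_zero' : (0 : Fin (2*n+1)).rev = Fin.last (2*n) := by
  apply Fin.ext; rw [Fin.val_rev]; simp

lemma rev_last' : (Fin.last (2*n) : Fin (2*n+1)).rev = 0 := by
  apply Fin.ext; rw [Fin.val_rev]; simp

lemma eps_last0 (hn : 0 < n) : eps n (Fin.last (2*n)) (0 : Fin (2*n+1)) = 1 := by
  unfold eps
  rw [Fin.val_last, Fin.val_zero]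
  have h1 : 2*n - 2*n = 0 := by omega
  rw [h1, Nat.sub_zero, dd_small n hn, ee_big n (by omega),
    neg_one_pow_congr (b := 1) (by omega), pow_one]
  ring

lemma lie_std (a b c : Fin (2*n+1)) (hac : a ≠ c) :
    ⁅Matrix.single a b (1:ℂ), Matrix.single b c (1:ℂ)⁆
      = Matrix.single a c (1:ℂ) := by
  rw [Ring.lie_def, Matrix.single_mul_single_same,
    Matrix.single_mul_single_of_ne (h := Ne.symm hac), one_mul, sub_zero]

lemma lie_std_diag (a b : Fin (2*n+1)) :
    ⁅Matrix.single a b (1:ℂ), Matrix.single b a (1:ℂ)⁆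
      = Matrix.single a a (1:ℂ) - Matrix.single b b (1:ℂ) := by
  rw [Ring.lie_def, Matrix.single_mul_single_same, Matrix.single_mul_single_same,
    one_mul]

end Stmt7Aux

open Stmt7Aux in

/-- `g = sl_{2n+1}(ℂ)` (realized as the traceless matrices inside
`M = Matrix (Fin (2n+1)) (Fin (2n+1)) ℂ`) with the order-4 special automorphism `σ`,
characterized on the Chevalley generators `e_i = E_{i,i+1}` by
`σ(e_i) = e_{τ(i)}` for `i ∉ {n, n+1}`, `σ(e_i) = √-1 · e_{τ(i)}` for `i ∈ {n, n+1}`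
(1-indexed; `τ(i) = 2n+1-i`), and `σ(f_θ) = f_θ` for `f_θ = E_{2n+1,1}`.
Conclusion: the fixed subalgebra `g^σ` is isomorphic (as a Lie algebra) to `sp_{2n}(ℂ)`,
and both eigenspaces `g₁` (eigenvalue `i`) and `g₃` (eigenvalue `-i`) are isomorphic, as
`g^σ`-modules, to the standard `2n`-dimensional representation of `sp_{2n}` — the module
structure being transported through the isomorphism `φ` with `sp`. -/
theorem stmt7 (n : ℕ) (hn : 0 < n)
    (σ : Module.End ℂ (Matrix (Fin (2 * n + 1)) (Fin (2 * n + 1)) ℂ))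
    (hσtr : ∀ X, X.trace = 0 → (σ X).trace = 0)
    (hσlie : ∀ X Y, X.trace = 0 → Y.trace = 0 → σ ⁅X, Y⁆ = ⁅σ X, σ Y⁆)
    (hσ4 : σ ^ 4 = 1)
    (hσe : ∀ i : Fin (2 * n),
      σ (Matrix.single i.castSucc i.succ (1 : ℂ)) =
        (if (i : ℕ) = n - 1 ∨ (i : ℕ) = n then Complex.I else 1) •
          Matrix.single (i.rev.castSucc) (i.rev.succ) (1 : ℂ))
    (hσfθ : σ (Matrix.single (Fin.last (2 * n)) 0 (1 : ℂ)) =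
        Matrix.single (Fin.last (2 * n)) 0 (1 : ℂ)) :
    ∃ φ : Matrix (Fin (2 * n + 1)) (Fin (2 * n + 1)) ℂ →ₗ[ℂ]
        Matrix (Fin n ⊕ Fin n) (Fin n ⊕ Fin n) ℂ,
      Set.InjOn φ {X | σ X = X ∧ X.trace = 0} ∧
      φ '' {X | σ X = X ∧ X.trace = 0}
        = ((LieAlgebra.Symplectic.sp (Fin n) ℂ :
            LieSubalgebra ℂ (Matrix (Fin n ⊕ Fin n) (Fin n ⊕ Fin n) ℂ)) : Set _) ∧
      (∀ X ∈ {X | σ X = X ∧ X.trace = 0}, ∀ Y ∈ {X | σ X = X ∧ X.trace = 0},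
        φ ⁅X, Y⁆ = ⁅φ X, φ Y⁆) ∧
      (∃ ψ : Matrix (Fin (2 * n + 1)) (Fin (2 * n + 1)) ℂ →ₗ[ℂ] ((Fin n ⊕ Fin n) → ℂ),
        Set.InjOn ψ {X | σ X = Complex.I • X ∧ X.trace = 0} ∧
        ψ '' {X | σ X = Complex.I • X ∧ X.trace = 0} = Set.univ ∧
        ∀ X ∈ {X | σ X = X ∧ X.trace = 0}, ∀ Y ∈ {X | σ X = Complex.I • X ∧ X.trace = 0},
          ψ ⁅X, Y⁆ = (φ X).mulVec (ψ Y)) ∧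
      (∃ ψ : Matrix (Fin (2 * n + 1)) (Fin (2 * n + 1)) ℂ →ₗ[ℂ] ((Fin n ⊕ Fin n) → ℂ),
        Set.InjOn ψ {X | σ X = -(Complex.I • X) ∧ X.trace = 0} ∧
        ψ '' {X | σ X = -(Complex.I • X) ∧ X.trace = 0} = Set.univ ∧
        ∀ X ∈ {X | σ X = X ∧ X.trace = 0},
          ∀ Y ∈ {X | σ X = -(Complex.I • X) ∧ X.trace = 0},
          ψ ⁅X, Y⁆ = (φ X).mulVec (ψ Y)) := by
  classical
  have hcI : Complex.I * Complex.I = -1 := Complex.I_mul_I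
  set S : Submodule ℂ (M n) :=
    { carrier := {X | X.trace = 0 ∧ σ X = TT n X}
      add_mem' := fun {X Y} hX hY => ⟨by rw [Matrix.trace_add, hX.1, hY.1, add_zero],
        by rw [map_add, map_add, hX.2, hY.2]⟩
      zero_mem' := ⟨by simp, by rw [map_zero, map_zero]⟩
      smul_mem' := fun c X hX => ⟨by rw [Matrix.trace_smul, hX.1, smul_zero],
        by rw [map_smul, map_smul, hX.2]⟩ } with hSdef
  have hSmem : ∀ X : M n, X ∈ S ↔ X.trace = 0 ∧ σ X = TT n X := fun _ => Iff.rfl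
  have hSbr : ∀ X ∈ S, ∀ Y ∈ S, ⁅X, Y⁆ ∈ S := by
    intro X hX Y hY
    rw [hSmem] at hX hY ⊢
    refine ⟨?_, ?_⟩
    · rw [Ring.lie_def, Matrix.trace_sub, Matrix.trace_mul_comm, sub_self]
    · rw [hσlie X Y hX.1 hY.1, hX.2, hY.2, TT_bracket]
  have hgen1 : ∀ i : Fin (2*n),
      Matrix.single i.castSucc i.succ (1:ℂ) ∈ S := by
    intro i
    rw [hSmem]
    constructor
    · exact Matrix.trace_single_eq_of_ne _ _ _
        (by rw [Fin.ne_iff_vne, Fin.val_succ, Fin.coe_castSucc]; omega)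
    · rw [hσe i, TT_std]
      have e1 : (i.succ).rev = (i.rev).castSucc := by
        apply Fin.ext
        rw [Fin.val_rev, Fin.coe_castSucc, Fin.val_rev, Fin.val_succ]
        omega
      have e2 : (i.castSucc).rev = (i.rev).succ := by
        apply Fin.ext
        rw [Fin.val_rev, Fin.val_succ, Fin.val_rev, Fin.coe_castSucc]
        have := i.isLt; omega
      rw [e1, e2, eps_step]
  have hgen2 : Matrix.single (Fin.last (2*n)) (0 : Fin (2*n+1)) (1:ℂ) ∈ S := by
    rw [hSmem]
    constructor
    · exact Matrix.trace_single_eq_of_ne _ _ _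
        (by rw [Fin.ne_iff_vne, Fin.val_last, Fin.val_zero]; omega)
    · rw [hσfθ, TT_std, rev_zero', rev_last', eps_last0 n hn, one_smul]
  have hstep : ∀ a b : Fin (2*n+1), b.val = a.val + 1 →
      Matrix.single a b (1:ℂ) ∈ S := by
    intro a b hab
    have ha : a.val < 2*n := by have := b.isLt; omega
    have h1 := hgen1 ⟨a.val, ha⟩
    have e1 : (⟨a.val, ha⟩ : Fin (2*n)).castSucc = a := Fin.ext rfl
    have e2 : (⟨a.val, ha⟩ : Fin (2*n)).succ = b := Fin.ext hab.symm
    rwa [e1, e2] at h1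
  have hupper : ∀ g : ℕ, ∀ a b : Fin (2*n+1), b.val = a.val + g + 1 →
      Matrix.single a b (1:ℂ) ∈ S := by
    intro g
    induction g with
    | zero => exact fun a b hab => hstep a b (by omega)
    | succ g ih =>
      intro a b hab
      have hmid : a.val + 1 < 2*n+1 := by have := b.isLt; omega
      have h1 : Matrix.single a (⟨a.val+1, hmid⟩ : Fin (2*n+1)) (1:ℂ) ∈ S :=
        hstep a _ rfl
      have h2 : Matrix.single (⟨a.val+1, hmid⟩ : Fin (2*n+1)) b (1:ℂ) ∈ S :=
        ih _ b (show b.val = a.val + 1 + g + 1 by omega)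
      have h3 := hSbr _ h1 _ h2
      rwa [lie_std n a _ b (Fin.ne_of_val_ne (by omega))] at h3
  have hcolS : ∀ g : ℕ, ∀ a : Fin (2*n+1), a.val + g = 2*n → 1 ≤ a.val →
      Matrix.single a (0 : Fin (2*n+1)) (1:ℂ) ∈ S := by
    intro g
    induction g with
    | zero =>
      intro a ha _
      have : a = Fin.last (2*n) := Fin.ext (by rw [Fin.val_last]; omega)
      rw [this]; exact hgen2
    | succ g ih =>
      intro a ha ha1
      have hmid : a.val + 1 < 2*n+1 := by omega
      have h1 : Matrix.single a (⟨a.val+1, hmid⟩ : Fin (2*n+1)) (1:ℂ) ∈ S :=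
        hstep a _ rfl
      have h2 : Matrix.single (⟨a.val+1, hmid⟩ : Fin (2*n+1)) (0 : Fin (2*n+1)) (1:ℂ) ∈ S :=
        ih _ (show a.val + 1 + g = 2*n by omega) (show 1 ≤ a.val + 1 by omega)
      have h3 := hSbr _ h1 _ h2
      rwa [lie_std n a _ 0 (Fin.ne_of_val_ne (by rw [Fin.val_zero]; omega))] at h3
  have hlowS : ∀ a b : Fin (2*n+1), b.val < a.val →
      Matrix.single a b (1:ℂ) ∈ S := by
    intro a b hba
    by_cases hb : b.val = 0
    · have hb0 : b = 0 := Fin.ext (by rw [Fin.val_zero]; omega)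
      rw [hb0]
      exact hcolS (2*n - a.val) a (by have := a.isLt; omega) (by omega)
    · have h1 : Matrix.single a (0 : Fin (2*n+1)) (1:ℂ) ∈ S :=
        hcolS (2*n - a.val) a (by have := a.isLt; omega) (by omega)
      have h2 : Matrix.single (0 : Fin (2*n+1)) b (1:ℂ) ∈ S :=
        hupper (b.val - 1) 0 b (by rw [Fin.val_zero]; omega)
      have h3 := hSbr _ h1 _ h2
      rwa [lie_std n a 0 b (Fin.ne_of_val_ne (by omega))] at h3
  have hoff : ∀ a b : Fin (2*n+1), a ≠ b → Matrix.single a b (1:ℂ) ∈ S := by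
    intro a b hab
    rcases lt_trichotomy a.val b.val with h | h | h
    · exact hupper (b.val - a.val - 1) a b (by omega)
    · exact absurd (Fin.ext h) hab
    · exact hlowS a b h
  have hdiagS : ∀ a b : Fin (2*n+1), a ≠ b →
      (Matrix.single a a (1:ℂ) - Matrix.single b b (1:ℂ)) ∈ S := by
    intro a b hab
    have h3 := hSbr _ (hoff a b hab) _ (hoff b a hab.symm)
    rwa [lie_std_diag] at h3
  have key : ∀ X : M n, X.trace = 0 → σ X = TT n X := by
    intro X hX
    set G : Fin (2*n+1) → Fin (2*n+1) → M n := fun p q =>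
      if p = q then Matrix.single p p (1:ℂ)
        - Matrix.single (0 : Fin (2*n+1)) (0 : Fin (2*n+1)) (1:ℂ)
      else Matrix.single p q (1:ℂ) with hGdef
    have hGS : ∀ p q, G p q ∈ S := by
      intro p q
      simp only [hGdef]
      by_cases h : p = q
      · rw [if_pos h]
        by_cases h0 : p = 0
        · rw [h0, sub_self]; exact S.zero_mem
        · exact hdiagS p 0 h0
      · rw [if_neg h]; exact hoff p q h
    have hG2 : ∀ p q, X p q • G p q = Matrix.single p q (X p q)
        - (if p = q then X p q • Matrix.single (0 : Fin (2*n+1)) (0 : Fin (2*n+1)) (1:ℂ) else 0) := by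
      intro p q
      simp only [hGdef]
      by_cases h : p = q
      · rw [if_pos h, if_pos h, smul_sub]
        subst h
        rw [Matrix.smul_single, smul_eq_mul, mul_one]
      · rw [if_neg h, if_neg h, sub_zero, Matrix.smul_single, smul_eq_mul, mul_one]
    have hXsum : X = ∑ p : Fin (2*n+1), ∑ q : Fin (2*n+1), X p q • G p q := by
      have htr : ∑ p : Fin (2*n+1), X p p = 0 := hX
      calc X = ∑ p : Fin (2*n+1), ∑ q : Fin (2*n+1), Matrix.single p q (X p q) :=
            Matrix.matrix_eq_sum_single X
        _ = ∑ p : Fin (2*n+1), ∑ q : Fin (2*n+1), (X p q • G p q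
            + (if p = q then X p q • Matrix.single (0 : Fin (2*n+1)) (0 : Fin (2*n+1)) (1:ℂ) else 0)) := by
          refine Finset.sum_congr rfl fun p _ => Finset.sum_congr rfl fun q _ => ?_
          rw [hG2, sub_add_cancel]
        _ = (∑ p : Fin (2*n+1), ∑ q : Fin (2*n+1), X p q • G p q)
            + ∑ p : Fin (2*n+1), ∑ q : Fin (2*n+1),
              (if p = q then X p q • Matrix.single (0 : Fin (2*n+1)) (0 : Fin (2*n+1)) (1:ℂ) else 0) := by
          rw [← Finset.sum_add_distrib]
          refine Finset.sum_congr rfl fun p _ => ?_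
          rw [← Finset.sum_add_distrib]
        _ = ∑ p : Fin (2*n+1), ∑ q : Fin (2*n+1), X p q • G p q := by
          have e3 : ∑ p : Fin (2*n+1), ∑ q : Fin (2*n+1),
              (if p = q then X p q • Matrix.single (0 : Fin (2*n+1)) (0 : Fin (2*n+1)) (1:ℂ) else 0)
              = ∑ p : Fin (2*n+1), X p p • Matrix.single (0 : Fin (2*n+1)) (0 : Fin (2*n+1)) (1:ℂ) := by
            refine Finset.sum_congr rfl fun p _ => ?_
            rw [Finset.sum_ite_eq, if_pos (Finset.mem_univ p)]
          rw [e3, ← Finset.sum_smul, htr, zero_smul, add_zero]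
    have hmem : X ∈ S := by
      rw [hXsum]
      exact Submodule.sum_mem _ fun p _ => Submodule.sum_mem _ fun q _ =>
        Submodule.smul_mem _ _ (hGS p q)
    exact hmem.2
  -- translation between σ-conditions and TT-conditions
  have hfixT : ∀ X : M n, (σ X = X ∧ X.trace = 0) → TT n X = X := by
    intro X h
    rw [← key X h.2, h.1]
  have hfixσ : ∀ X : M n, TT n X = X → (σ X = X ∧ X.trace = 0) := by
    intro X h
    have htr := fix_trace n h
    exact ⟨by rw [key X htr, h], htr⟩
  have heigT : ∀ (c : ℂ) (X : M n), (σ X = c • X ∧ X.trace = 0) → TT n X = c • X := by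
    intro c X h
    rw [← key X h.2, h.1]
  have hnegI : ∀ X : M n, -(Complex.I • X) = (-Complex.I) • X := by
    intro X; rw [neg_smul]
  have hcnI : (-Complex.I) * (-Complex.I) = -1 := by
    rw [neg_mul_neg, hcI]
  refine ⟨phi n, ?_, ?_, ?_, ?_, ?_⟩
  · -- injectivity on fixed set
    intro X hX Y hY h
    exact phi_inj n hn (hfixT X hX) (hfixT Y hY) h
  · -- image is sp
    apply Set.eq_of_subset_of_subset
    · rintro Z ⟨X, hX, rfl⟩
      exact phi_mem_sp n hn (hfixT X hX)
    · intro Z hZ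
      obtain ⟨X, hfix, htr, hphi⟩ := sp_surj n hn hZ
      exact ⟨X, hfixσ X hfix, hphi⟩
  · -- bracket
    intro X hX Y hY
    exact phi_bracket n hn (hfixT X hX) (hfixT Y hY)
  · -- eigenvalue I
    refine ⟨psi n, ?_, ?_, ?_⟩
    · intro X hX Y hY h
      exact psi_inj n hn hcI (heigT _ X hX) (heigT _ Y hY) h
    · apply Set.eq_of_subset_of_subset
      · exact fun v _ => Set.mem_univ v
      · intro v _
        obtain ⟨Y, heig, htr, hpsi⟩ := psi_surj n hn hcI v
        exact ⟨Y, ⟨by rw [key Y htr, heig], htr⟩, hpsi⟩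
    · intro X hX Y hY
      exact module_prop n hn (hfixT X hX) Y
  · -- eigenvalue -I
    refine ⟨psi n, ?_, ?_, ?_⟩
    · intro X hX Y hY h
      refine psi_inj n hn hcnI ?_ ?_ h
      · exact heigT _ X ⟨by rw [hX.1, hnegI], hX.2⟩
      · exact heigT _ Y ⟨by rw [hY.1, hnegI], hY.2⟩
    · apply Set.eq_of_subset_of_subset
      · exact fun v _ => Set.mem_univ v
      · intro v _
        obtain ⟨Y, heig, htr, hpsi⟩ := psi_surj n hn hcnI v
        exact ⟨Y, ⟨by rw [key Y htr, heig, hnegI], htr⟩, hpsi⟩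
    · intro X hX Y hY
      exact module_prop n hn (hfixT X hX) Y
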